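/- Let m ≥ 1 be an integer, let z_j = (cos(2πj/(m+1)), sin(2πj/(m+1))) ∈ ℝ² for j = 0, …, m, and set a₀ := ∑_{j=1}^{m} log‖z_j − z₀‖ and G(x) := −∑_{j=0}^{m} log‖x − z_j‖. Then there exist constants C > 0 and ε ∈ (0,1) such that for every y ∈ ℝ² with 0 < ‖y‖ < ε, | G(z₀ + y) + log‖y‖ + a₀ + (m/2)⟨z₀, y⟩ | ≤ C ‖y‖². -/

import Mathlib

open Real

/-- The `(m+1)`-th roots of unity, viewed as points of the plane `ℝ² ≃ ℂ`:
`z j = (cos(2πj/(m+1)), sin(2πj/(m+1)))`. -/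
noncomputable def polygonVertex (m j : ℕ) : ℂ :=
  ⟨Real.cos (2 * π * j / (m + 1)), Real.sin (2 * π * j / (m + 1))⟩

lemma pv_zero (m : ℕ) : polygonVertex m 0 = 1 := by
  simp [polygonVertex, Complex.ext_iff]

lemma pv_normSq (m j : ℕ) : Complex.normSq (polygonVertex m j) = 1 := by
  simp only [polygonVertex, Complex.normSq_mk, ← sq]
  rw [add_comm]; exact Real.sin_sq_add_cos_sq _

lemma pv_ne_one (m : ℕ) {j : ℕ} (hj : j ∈ Finset.Icc 1 m) : polygonVertex m j ≠ 1 := by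
  obtain ⟨h1, h2⟩ := Finset.mem_Icc.mp hj
  intro h
  have hre : Real.cos (2 * π * j / (m + 1)) = 1 := congrArg Complex.re h
  have hm1 : (0:ℝ) < (m:ℝ) + 1 := by positivity
  have hθpos : 0 < 2 * π * j / (m + 1) := by
    have : (0:ℝ) < (j:ℝ) := by exact_mod_cast h1
    positivity
  have hθlt : 2 * π * j / (m + 1) < 2 * π := by
    rw [div_lt_iff₀ hm1]
    have hj' : (j:ℝ) < (m:ℝ) + 1 := by exact_mod_cast Nat.lt_succ_of_le h2
    nlinarith [Real.pi_pos]
  have := (Real.cos_eq_one_iff_of_lt_of_lt (by linarith) hθlt).mp hre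
  linarith

lemma pv_conj (m : ℕ) {j : ℕ} (hj : j ∈ Finset.Icc 1 m) :
    polygonVertex m (m + 1 - j) = starRingEnd ℂ (polygonVertex m j) := by
  obtain ⟨h1, h2⟩ := Finset.mem_Icc.mp hj
  have hc : ((m + 1 - j : ℕ) : ℝ) = (m : ℝ) + 1 - j := by
    rw [Nat.cast_sub (by omega)]; push_cast; ring
  have hm1 : ((m:ℝ) + 1) ≠ 0 := by positivity
  have harg : 2 * π * ((m + 1 - j : ℕ) : ℝ) / (m + 1) = 2 * π - 2 * π * j / (m + 1) := by
    rw [hc]; field_simp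
  simp only [polygonVertex, Complex.ext_iff, Complex.conj_re, Complex.conj_im]
  rw [harg]
  exact ⟨Real.cos_two_pi_sub _, Real.sin_two_pi_sub _⟩

lemma term_pair (m : ℕ) {j : ℕ} (hj : j ∈ Finset.Icc 1 m) :
    (1 - polygonVertex m j)⁻¹ + (1 - starRingEnd ℂ (polygonVertex m j))⁻¹ = 1 := by
  set z := polygonVertex m j with hz
  have hz1 : (1:ℂ) - z ≠ 0 := sub_ne_zero.mpr (Ne.symm (pv_ne_one m hj))
  have hz2 : (1:ℂ) - starRingEnd ℂ z ≠ 0 := by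
    rw [sub_ne_zero]
    intro h
    exact pv_ne_one m hj (by simpa using congrArg (starRingEnd ℂ) h.symm)
  have hmul : z * starRingEnd ℂ z = 1 := by
    rw [Complex.mul_conj, pv_normSq]; norm_num
  field_simp
  linear_combination -hmul

lemma sum_inv (m : ℕ) (hm : 1 ≤ m) :
    ∑ j ∈ Finset.Icc 1 m, (1 - polygonVertex m j)⁻¹ = (m : ℂ) / 2 := by
  have hre : ∑ j ∈ Finset.Icc 1 m, (1 - polygonVertex m j)⁻¹
      = ∑ j ∈ Finset.Icc 1 m, (1 - starRingEnd ℂ (polygonVertex m j))⁻¹ := by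
    refine Finset.sum_nbij' (fun j => m + 1 - j) (fun j => m + 1 - j) ?_ ?_ ?_ ?_ ?_
    · intro j hj; simp only [Finset.mem_Icc] at hj ⊢; omega
    · intro j hj; simp only [Finset.mem_Icc] at hj ⊢; omega
    · intro j hj; simp only [Finset.mem_Icc] at hj; omega
    · intro j hj; simp only [Finset.mem_Icc] at hj; omega
    · intro j hj; rw [pv_conj m hj, Complex.conj_conj]
  have h2 : (2:ℂ) * ∑ j ∈ Finset.Icc 1 m, (1 - polygonVertex m j)⁻¹ = m := by
    rw [two_mul]
    nth_rewrite 2 [hre]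
    rw [← Finset.sum_add_distrib]
    rw [Finset.sum_congr rfl (fun j hj => term_pair m hj)]
    simp [Nat.card_Icc]
  rw [eq_div_iff (two_ne_zero)]
  linear_combination h2

/-- Expansion of the Green's function `G(x) = −∑_{j=0}^m log‖x − z_j‖` at the
vertex `z₀`: with `a₀ = ∑_{j=1}^m log‖z_j − z₀‖`, one has
`G(z₀ + y) = −log‖y‖ − a₀ − (m/2)⟨z₀, y⟩ + O(‖y‖²)` for small `y ≠ 0`. -/
theorem green_function_expansion_at_vertex (m : ℕ) (hm : 1 ≤ m) :
    ∃ C > (0:ℝ), ∃ ε ∈ Set.Ioo (0:ℝ) 1, ∀ y : ℂ, 0 < ‖y‖ → ‖y‖ < ε →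
      |(-(∑ j ∈ Finset.range (m + 1),
            Real.log ‖(polygonVertex m 0 + y) - polygonVertex m j‖))
          + Real.log ‖y‖
          + (∑ j ∈ Finset.Icc 1 m, Real.log ‖polygonVertex m j - polygonVertex m 0‖)
          + ((m : ℝ) / 2) *
              ((polygonVertex m 0).re * y.re + (polygonVertex m 0).im * y.im)|
        ≤ C * ‖y‖ ^ 2 := by
  have hne : (Finset.Icc 1 m).Nonempty := ⟨1, Finset.mem_Icc.mpr ⟨le_refl 1, hm⟩⟩
  have hwne : ∀ j ∈ Finset.Icc 1 m, (1 : ℂ) - polygonVertex m j ≠ 0 :=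
    fun j hj => sub_ne_zero.mpr (Ne.symm (pv_ne_one m hj))
  set δ := (Finset.Icc 1 m).inf' hne (fun j => ‖(1 : ℂ) - polygonVertex m j‖) with hδ
  have hδpos : 0 < δ := by
    rw [hδ, Finset.lt_inf'_iff]
    exact fun j hj => norm_pos_iff.mpr (hwne j hj)
  have hδle : ∀ j ∈ Finset.Icc 1 m, δ ≤ ‖(1:ℂ) - polygonVertex m j‖ :=
    fun j hj => Finset.inf'_le _ hj
  have hmpos : (0:ℝ) < m := by exact_mod_cast Nat.lt_of_lt_of_le Nat.zero_lt_one hm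
  refine ⟨(m:ℝ) / δ^2, by positivity, min (δ/2) (1/2),
    ⟨lt_min (by positivity) (by norm_num),
     lt_of_le_of_lt (min_le_right _ _) (by norm_num)⟩, ?_⟩
  intro y hy0 hyε
  have hyδ : ‖y‖ < δ/2 := lt_of_lt_of_le hyε (min_le_left _ _)
  -- split off the j = 0 term
  have hsplit : ∑ j ∈ Finset.range (m + 1),
      Real.log ‖(polygonVertex m 0 + y) - polygonVertex m j‖
      = Real.log ‖y‖ + ∑ j ∈ Finset.Icc 1 m,
          Real.log ‖(polygonVertex m 0 + y) - polygonVertex m j‖ := by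
    rw [Finset.sum_range_succ', ← Finset.Ico_add_one_right_eq_Icc, Finset.sum_Ico_eq_sum_range,
      Nat.add_sub_cancel, add_comm]
    congr 1
    · rw [pv_zero]; congr 1; ring_nf
    · exact Finset.sum_congr rfl fun i _ => by rw [add_comm 1 i]
  -- the linear term as a sum
  have hlin : ((m : ℝ) / 2) *
        ((polygonVertex m 0).re * y.re + (polygonVertex m 0).im * y.im)
      = ∑ j ∈ Finset.Icc 1 m, (y * ((1:ℂ) - polygonVertex m j)⁻¹).re := by
    have h1 : ∑ j ∈ Finset.Icc 1 m, (y * ((1:ℂ) - polygonVertex m j)⁻¹)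
        = y * ((m:ℂ)/2) := by rw [← Finset.mul_sum, sum_inv m hm]
    have h2 : (∑ j ∈ Finset.Icc 1 m, (y * ((1:ℂ) - polygonVertex m j)⁻¹)).re
        = ∑ j ∈ Finset.Icc 1 m, (y * ((1:ℂ) - polygonVertex m j)⁻¹).re :=
      Complex.re_sum _ _
    rw [← h2, h1, pv_zero]
    simp [Complex.mul_re, Complex.div_re, Complex.normSq]
    ring
  -- rewrite as a single sum
  rw [hsplit, hlin]
  have hB : ∑ j ∈ Finset.Icc 1 m, Real.log ‖polygonVertex m j - polygonVertex m 0‖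
      = ∑ j ∈ Finset.Icc 1 m, Real.log ‖(1:ℂ) - polygonVertex m j‖ :=
    Finset.sum_congr rfl fun j _ => by rw [pv_zero, norm_sub_rev]
  have hA : ∑ j ∈ Finset.Icc 1 m,
        Real.log ‖(polygonVertex m 0 + y) - polygonVertex m j‖
      = ∑ j ∈ Finset.Icc 1 m,
        Real.log ‖((1:ℂ) - polygonVertex m j) + y‖ :=
    Finset.sum_congr rfl fun j _ => by rw [pv_zero]; congr 2; ring
  rw [hA, hB]
  have hcomb : -(Real.log ‖y‖ + ∑ j ∈ Finset.Icc 1 m,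
          Real.log ‖((1:ℂ) - polygonVertex m j) + y‖)
        + Real.log ‖y‖
        + ∑ j ∈ Finset.Icc 1 m, Real.log ‖(1:ℂ) - polygonVertex m j‖
        + ∑ j ∈ Finset.Icc 1 m, (y * ((1:ℂ) - polygonVertex m j)⁻¹).re
      = ∑ j ∈ Finset.Icc 1 m,
          (Real.log ‖(1:ℂ) - polygonVertex m j‖
            - Real.log ‖((1:ℂ) - polygonVertex m j) + y‖
            + (y * ((1:ℂ) - polygonVertex m j)⁻¹).re) := by
    rw [Finset.sum_add_distrib, Finset.sum_sub_distrib]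
    ring
  rw [hcomb]
  -- per-term bound
  have hterm : ∀ j ∈ Finset.Icc 1 m,
      |Real.log ‖(1:ℂ) - polygonVertex m j‖
        - Real.log ‖((1:ℂ) - polygonVertex m j) + y‖
        + (y * ((1:ℂ) - polygonVertex m j)⁻¹).re| ≤ ‖y‖^2 / δ^2 := by
    intro j hj
    set w : ℂ := (1:ℂ) - polygonVertex m j with hwdef
    have hw0 : w ≠ 0 := hwne j hj
    have hwδ : δ ≤ ‖w‖ := hδle j hj
    set u : ℂ := y * w⁻¹ with hudef
    have hunorm : ‖u‖ ≤ ‖y‖ / δ := by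
      rw [hudef, norm_mul, norm_inv]
      rw [div_eq_mul_inv]
      gcongr
    have hu2 : ‖u‖ < 1/2 := by
      refine lt_of_le_of_lt hunorm ?_
      rw [div_lt_iff₀ hδpos]
      linarith
    have h1u : ‖(1:ℂ) + u‖ ≥ 1/2 := by
      have h := norm_sub_norm_le (1:ℂ) (-u)
      simp only [norm_neg, norm_one, sub_neg_eq_add] at h
      linarith
    have h1u0 : ‖(1:ℂ) + u‖ ≠ 0 := by positivity
    have hfac : w + y = w * (1 + u) := by
      rw [hudef]; field_simp
    have hlogfac : Real.log ‖w + y‖ = Real.log ‖w‖ + Real.log ‖(1:ℂ) + u‖ := by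
      rw [hfac, norm_mul, Real.log_mul (norm_ne_zero_iff.mpr hw0) h1u0]
    have hre : Real.log ‖(1:ℂ) + u‖ = (Complex.log (1 + u)).re := by
      rw [Complex.log_re]
    have key : Real.log ‖w‖ - Real.log ‖w + y‖ + u.re
        = -((Complex.log (1 + u) - u).re) := by
      rw [hlogfac, hre, Complex.sub_re]; ring
    rw [key, abs_neg]
    calc |(Complex.log (1 + u) - u).re| ≤ ‖Complex.log (1 + u) - u‖ :=
          Complex.abs_re_le_norm _
      _ ≤ ‖u‖^2 * (1 - ‖u‖)⁻¹ / 2 :=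
          Complex.norm_log_one_add_sub_self_le (by linarith)
      _ ≤ ‖u‖^2 := by
          have h1 : (1 - ‖u‖)⁻¹ ≤ 2 := by
            rw [inv_le_comm₀ (by linarith) (by norm_num)]
            linarith
          nlinarith [norm_nonneg u, sq_nonneg ‖u‖]
      _ ≤ (‖y‖/δ)^2 := by gcongr
      _ = ‖y‖^2 / δ^2 := by rw [div_pow]
  calc |∑ j ∈ Finset.Icc 1 m, (Real.log ‖(1:ℂ) - polygonVertex m j‖
            - Real.log ‖((1:ℂ) - polygonVertex m j) + y‖
            + (y * ((1:ℂ) - polygonVertex m j)⁻¹).re)|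
      ≤ ∑ j ∈ Finset.Icc 1 m, |Real.log ‖(1:ℂ) - polygonVertex m j‖
            - Real.log ‖((1:ℂ) - polygonVertex m j) + y‖
            + (y * ((1:ℂ) - polygonVertex m j)⁻¹).re| :=
        Finset.abs_sum_le_sum_abs _ _
    _ ≤ ∑ _j ∈ Finset.Icc 1 m, ‖y‖^2 / δ^2 := Finset.sum_le_sum hterm
    _ = (m:ℝ) * (‖y‖^2 / δ^2) := by
        rw [Finset.sum_const, Nat.card_Icc, Nat.add_sub_cancel, nsmul_eq_mul]
    _ = (m:ℝ) / δ^2 * ‖y‖^2 := by ring
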